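/- There exists a universal constant C₀ > 0 with the following property. Let s₁, s₂ ∈ {+1, −1}, let k, k₁, k₂ ∈ ℕ and j, j₁, j₂ ∈ ℤ, and let φ, u₁, u₂ : ℝ × ℝ² → ℂ be Schwartz functions whose space-time Fourier transforms satisfy supp φ̂ ⊆ A_k ∩ B^{+1}_j and supp ûᵢ ⊆ A_{kᵢ} ∩ B^{sᵢ}_{jᵢ} for i = 1, 2. Suppose either (a) s₁ = +1 and s₂ = −1, or (b) s₁ = −1, s₂ = +1 and k ≤ min(k₁, k₂) − C₀. If max(j, j₁, j₂) ≤ max(k, k₁, k₂) − C₀, then ∫_{ℝ×ℝ²} φ(t,x)·u₁(t,x)·conj(u₂(t,x)) dt dx = 0. -/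

import Mathlib

noncomputable section

open MeasureTheory
open scoped ENNReal
open Real Complex FourierTransform RealInnerProductSpace
open scoped SchwartzMap

/-- ℝ² as a Euclidean space. -/
abbrev E2 := EuclideanSpace ℝ (Fin 2)

/-- Space-time ℝ_t × ℝ²_x (equivalently its Fourier dual ℝ_τ × ℝ²_ξ) as ℝ³,
with the time (resp. τ) variable being the 0-th coordinate. -/
abbrev E3 := EuclideanSpace ℝ (Fin 3)

/-- The spatial (frequency) part ξ ∈ ℝ² of a space-time point `z = (τ, ξ)`. -/
def xiv (z : E3) : E2 := (WithLp.equiv 2 (Fin 2 → ℝ)).symm ![z 1, z 2]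

/-- The Japanese bracket `⟨ξ⟩ = √(1 + |ξ|²)` of the frequency part. -/
def jxi (z : E3) : ℝ := Real.sqrt (1 + ‖xiv z‖ ^ 2)

/-- The dyadic frequency region `A_k = {(τ,ξ) : |ξ| ≤ 2^{k+2}, and |ξ| ≥ 2^{k-2} if k ≥ 1}`. -/
def Ak (k : ℕ) : Set E3 :=
  {z | ‖xiv z‖ ≤ (2 : ℝ) ^ ((k : ℝ) + 2) ∧ (1 ≤ k → (2 : ℝ) ^ ((k : ℝ) - 2) ≤ ‖xiv z‖)}

/-- The dyadic modulation region `B^s_j = {(τ,ξ) : 2^{j-2} ≤ |τ + s⟨ξ⟩| ≤ 2^{j+2}}`. -/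
def Bsj (s : ℝ) (j : ℤ) : Set E3 :=
  {z | (2 : ℝ) ^ ((j : ℝ) - 2) ≤ |z 0 + s * jxi z| ∧ |z 0 + s * jxi z| ≤ (2 : ℝ) ^ ((j : ℝ) + 2)}



lemma xiv_add (a b : E3) : xiv (a + b) = xiv a + xiv b := by
  ext i
  fin_cases i <;> simp [xiv]

lemma one_le_jxi (z : E3) : 1 ≤ jxi z := by
  rw [jxi, show (1:ℝ) = Real.sqrt 1 from (Real.sqrt_one).symm]
  exact Real.sqrt_le_sqrt (by nlinarith [sq_nonneg ‖xiv z‖, Real.sqrt_one])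

lemma norm_le_jxi (z : E3) : ‖xiv z‖ ≤ jxi z := by
  rw [jxi]
  have h : ‖xiv z‖ = Real.sqrt (‖xiv z‖ ^ 2) := by
    rw [Real.sqrt_sq (norm_nonneg _)]
  rw [h]
  apply Real.sqrt_le_sqrt
  · nlinarith [Real.sq_sqrt (show (0:ℝ) ≤ ‖xiv z‖^2 by positivity)]

lemma jxi_le (z : E3) : jxi z ≤ 1 + ‖xiv z‖ := by
  rw [jxi]
  have h := Real.sqrt_le_sqrt (show 1 + ‖xiv z‖^2 ≤ (1 + ‖xiv z‖)^2 by nlinarith [norm_nonneg (xiv z)])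
  rwa [Real.sqrt_sq (by positivity)] at h


lemma fst_add (a b : E3) : (a + b) 0 = a 0 + b 0 := rfl

lemma rpow_mono {x y : ℝ} (h : x ≤ y) : (2:ℝ) ^ x ≤ (2:ℝ) ^ y :=
  Real.rpow_le_rpow_of_exponent_le one_le_two h

lemma key_arith (s₁ s₂ : ℝ) (k k₁ k₂ : ℕ) (j j₁ j₂ : ℤ) (a b : E3)
    (ha : a ∈ Ak k ∩ Bsj 1 j) (hb : b ∈ Ak k₁ ∩ Bsj s₁ j₁)
    (hab : a + b ∈ Ak k₂ ∩ Bsj s₂ j₂)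
    (hcase : (s₁ = 1 ∧ s₂ = -1) ∨
      (s₁ = -1 ∧ s₂ = 1 ∧ (k : ℝ) ≤ min (k₁ : ℝ) (k₂ : ℝ) - 100))
    (hJ : (max j (max j₁ j₂) : ℝ) ≤ (max k (max k₁ k₂) : ℝ) - 100) : False := by
  set K : ℝ := max (k:ℝ) (max (k₁:ℝ) (k₂:ℝ)) with hK
  obtain ⟨⟨hA1, hA2⟩, hAB1, hAB2⟩ := ha
  obtain ⟨⟨hB1, hB2⟩, hBB1, hBB2⟩ := hb
  obtain ⟨⟨hC1, hC2⟩, hCB1, hCB2⟩ := hab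
  have hJj : ((j:ℝ)) ≤ K - 100 :=
    le_trans (le_max_left (j:ℝ) (max (j₁:ℝ) (j₂:ℝ))) hJ
  have hJj1 : ((j₁:ℝ)) ≤ K - 100 :=
    le_trans (le_trans (le_max_left _ _) (le_max_right (j:ℝ) (max (j₁:ℝ) (j₂:ℝ)))) hJ
  have hJj2 : ((j₂:ℝ)) ≤ K - 100 :=
    le_trans (le_trans (le_max_right _ _) (le_max_right (j:ℝ) (max (j₁:ℝ) (j₂:ℝ)))) hJ
  have hKk : (k:ℝ) ≤ K := le_max_left _ _
  have hKk₁ : (k₁:ℝ) ≤ K := le_trans (le_max_left _ _) (le_max_right _ _)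
  have hKk₂ : (k₂:ℝ) ≤ K := le_trans (le_max_right _ _) (le_max_right _ _)
  have hfst : (a + b) 0 = a 0 + b 0 := rfl
  set R : ℝ := jxi a + s₁ * jxi b - s₂ * jxi (a + b) with hRdef
  set t : ℝ := (2:ℝ) ^ (K - 98) with ht
  have h2pos : ∀ x : ℝ, (0:ℝ) < 2 ^ x := fun x => Real.rpow_pos_of_pos two_pos x
  have hRabs : |R| ≤ 3 * t := by
    have e1 : |a 0 + 1 * jxi a| ≤ t := le_trans hAB2 (rpow_mono (by linarith))
    have e2 : |b 0 + s₁ * jxi b| ≤ t := le_trans hBB2 (rpow_mono (by linarith))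
    have e3 : |(a + b) 0 + s₂ * jxi (a + b)| ≤ t := le_trans hCB2 (rpow_mono (by linarith))
    have hR : R = (a 0 + 1 * jxi a) + (b 0 + s₁ * jxi b)
        - ((a + b) 0 + s₂ * jxi (a + b)) := by
      rw [hRdef, hfst]; ring
    rw [hR]
    have := abs_le.1 e1; have := abs_le.1 e2; have := abs_le.1 e3
    rw [abs_le]; constructor <;> linarith
  have hsplit : (2:ℝ) ^ (K - 2) = 2 ^ (96:ℝ) * t := by
    rw [ht, ← Real.rpow_add two_pos]; ring_nf
  have hbig : (8:ℝ) ≤ (2:ℝ) ^ (96:ℝ) := by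
    have h1 : (2:ℝ) ^ (3:ℝ) ≤ (2:ℝ) ^ (96:ℝ) := rpow_mono (by norm_num)
    have h8 : (2:ℝ) ^ (3:ℝ) = 8 := by
      rw [show (3:ℝ) = ((3:ℕ):ℝ) by norm_num, Real.rpow_natCast]; norm_num
    linarith
  have hbigt : 8 * t ≤ 2 ^ (96:ℝ) * t :=
    mul_le_mul_of_nonneg_right hbig (le_of_lt (h2pos _))
  rcases hcase with ⟨hs₁, hs₂⟩ | ⟨hs₁, hs₂, hk⟩
  · -- case (+,-): R is the sum of the three brackets
    have hRsum : R = jxi a + jxi b + jxi (a + b) := by rw [hRdef, hs₁, hs₂]; ring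
    have hja := one_le_jxi a; have hjb := one_le_jxi b; have hjab := one_le_jxi (a + b)
    have hlow : (2:ℝ) ^ (K - 2) ≤ R := by
      by_cases hK1 : K < 1
      · have : (2:ℝ) ^ (K - 2) ≤ 2 ^ (0:ℝ) := rpow_mono (by linarith)
        rw [Real.rpow_zero] at this
        rw [hRsum]; linarith
      · push_neg at hK1
        rcases max_choice (k:ℝ) (max (k₁:ℝ) (k₂:ℝ)) with hm | hm
        · have h1k : 1 ≤ k := by exact_mod_cast (by rw [hK, hm] at hK1; exact_mod_cast hK1 : (1:ℝ) ≤ (k:ℝ))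
          have h2 : (2:ℝ) ^ (K - 2) ≤ ‖xiv a‖ := by rw [hK, hm]; exact hA2 h1k
          have := norm_le_jxi a
          rw [hRsum]; linarith
        · rcases max_choice (k₁:ℝ) (k₂:ℝ) with hm2 | hm2
          · have hKe : K = (k₁:ℝ) := by rw [hK, hm, hm2]
            have h1k : 1 ≤ k₁ := by exact_mod_cast (by rw [hKe] at hK1; exact hK1 : (1:ℝ) ≤ (k₁:ℝ))
            have h2 : (2:ℝ) ^ (K - 2) ≤ ‖xiv b‖ := by rw [hKe]; exact hB2 h1k
            have := norm_le_jxi b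
            rw [hRsum]; linarith
          · have hKe : K = (k₂:ℝ) := by rw [hK, hm, hm2]
            have h1k : 1 ≤ k₂ := by exact_mod_cast (by rw [hKe] at hK1; exact hK1 : (1:ℝ) ≤ (k₂:ℝ))
            have h2 : (2:ℝ) ^ (K - 2) ≤ ‖xiv (a + b)‖ := by rw [hKe]; exact hC2 h1k
            have := norm_le_jxi (a + b)
            rw [hRsum]; linarith
    have hRle : R ≤ |R| := le_abs_self R
    -- 8t ≤ 2^96 t = 2^(K-2) ≤ R ≤ |R| ≤ 3t, and t > 0: contradiction
    have := h2pos (K - 98)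
    rw [← ht] at this
    linarith
  · -- case (-,+) with k small
    have h100₁ : (100:ℝ) ≤ (k₁:ℝ) := by
      have := min_le_left (k₁:ℝ) (k₂:ℝ)
      have hk0 : (0:ℝ) ≤ (k:ℝ) := Nat.cast_nonneg k
      linarith
    have h100₂ : (100:ℝ) ≤ (k₂:ℝ) := by
      have := min_le_right (k₁:ℝ) (k₂:ℝ)
      have hk0 : (0:ℝ) ≤ (k:ℝ) := Nat.cast_nonneg k
      linarith
    have h1k₁ : 1 ≤ k₁ := by exact_mod_cast (by linarith : (1:ℝ) ≤ (k₁:ℝ))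
    have h1k₂ : 1 ≤ k₂ := by exact_mod_cast (by linarith : (1:ℝ) ≤ (k₂:ℝ))
    have hRneg : -R = jxi b + jxi (a + b) - jxi a := by rw [hRdef, hs₁, hs₂]; ring
    have hb2 : (2:ℝ) ^ ((k₁:ℝ) - 2) ≤ jxi b := le_trans (hB2 h1k₁) (norm_le_jxi b)
    have hc2 : (2:ℝ) ^ ((k₂:ℝ) - 2) ≤ jxi (a + b) := le_trans (hC2 h1k₂) (norm_le_jxi (a + b))
    have hKeq : K = max (k₁:ℝ) (k₂:ℝ) := by
      rw [hK, max_eq_right]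
      refine le_trans ?_ (le_max_left (k₁:ℝ) (k₂:ℝ))
      have := min_le_left (k₁:ℝ) (k₂:ℝ); linarith
    have hsum : (2:ℝ) ^ (K - 2) ≤ jxi b + jxi (a + b) := by
      rcases max_choice (k₁:ℝ) (k₂:ℝ) with hm | hm
      · have h2 : (2:ℝ) ^ (K - 2) ≤ jxi b := by rw [hKeq, hm]; exact hb2
        have := one_le_jxi (a + b); linarith
      · have h2 : (2:ℝ) ^ (K - 2) ≤ jxi (a + b) := by rw [hKeq, hm]; exact hc2
        have := one_le_jxi b; linarith
    have hja : jxi a ≤ 1 + t := by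
      have h2 : (2:ℝ) ^ ((k:ℝ) + 2) ≤ t := by
        apply rpow_mono
        have := min_le_left (k₁:ℝ) (k₂:ℝ)
        linarith
      have := jxi_le a
      have := hA1
      linarith
    have hRle : -R ≤ |R| := neg_le_abs R
    have hone : (1:ℝ) ≤ t := by
      have h2 : (2:ℝ) ^ (0:ℝ) ≤ t := rpow_mono (by linarith)
      rwa [Real.rpow_zero] at h2
    -- 2^96 t = 2^(K-2) ≤ jxi b + jxi (a+b) ≤ -R + jxi a ≤ 3t + 1 + t, while 2^96 t ≥ 8t ≥ 4t + 4
    linarith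


lemma mult_formula (f g : E3 → ℂ) (hf : Integrable f) (hg : Integrable g) :
    ∫ ξ, 𝓕 f ξ * g ξ = ∫ x, f x * 𝓕 g x := by
  have hL : Continuous fun p : E3 × E3 => (innerₗ E3) p.1 p.2 := continuous_inner
  have h := VectorFourier.integral_fourierIntegral_smul_eq_flip
    (μ := (volume : Measure E3)) (ν := (volume : Measure E3))
    (L := innerₗ E3) Real.continuous_fourierChar hL hf hg
  have hflip : (innerₗ E3).flip = innerₗ E3 := by
    apply LinearMap.ext; intro x; apply LinearMap.ext; intro y
    exact real_inner_comm x y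
  rw [hflip] at h
  exact h

lemma schwartz_ft_integrable (u : SchwartzMap E3 ℂ) : Integrable (𝓕 ⇑u) := by
  rw [← SchwartzMap.fourier_coe]
  exact (𝓕 u).integrable

lemma schwartz_ftinv_integrable (u : SchwartzMap E3 ℂ) : Integrable (𝓕⁻ ⇑u) := by
  rw [← SchwartzMap.fourierInv_coe]
  exact (𝓕⁻ u).integrable

lemma ft_ftinv (u : SchwartzMap E3 ℂ) : 𝓕 (𝓕⁻ ⇑u) = ⇑u :=
  Continuous.fourier_fourierInv_eq u.continuous u.integrable (schwartz_ft_integrable u)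

lemma ftinv_ft (u : SchwartzMap E3 ℂ) : 𝓕⁻ (𝓕 ⇑u) = ⇑u :=
  Continuous.fourierInv_fourier_eq u.continuous u.integrable (schwartz_ft_integrable u)

-- Fourier transform of the conjugate of the Fourier transform
lemma ft_conj_ft (u : SchwartzMap E3 ℂ) (x : E3) :
    𝓕 (fun w => (starRingEnd ℂ) (𝓕 ⇑u w)) x = (starRingEnd ℂ) (u x) := by
  rw [Real.fourier_eq]
  have : ∀ w : E3, 𝐞 (-⟪w, x⟫) • (starRingEnd ℂ) (𝓕 ⇑u w)
      = (starRingEnd ℂ) (𝐞 ⟪w, x⟫ • 𝓕 ⇑u w) := by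
    intro w
    rw [Circle.smul_def, Circle.smul_def, smul_eq_mul, smul_eq_mul, map_mul, Real.fourierChar_apply,
      Real.fourierChar_apply, ← Complex.exp_conj]
    congr 1
    rw [map_mul, Complex.conj_I, Complex.conj_ofReal]
    push_cast
    ring
  simp_rw [this]
  rw [integral_conj, ← Real.fourierInv_eq, ftinv_ft]

-- Fourier transform of a modulated function
lemma ft_modulation (u : SchwartzMap E3 ℂ) (z w : E3) :
    𝓕 (fun x => 𝐞 (-⟪x, z⟫) • u x) w = 𝓕 ⇑u (w + z) := by
  rw [Real.fourier_eq, Real.fourier_eq]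
  congr 1
  ext x
  rw [smul_smul, ← AddChar.map_add_eq_mul]
  have h : -⟪x, w⟫ + -⟪x, z⟫ = -⟪x, w + z⟫ := by rw [inner_add_right]; ring
  rw [h]

lemma modulated_integrable (u : SchwartzMap E3 ℂ) (z : E3) :
    Integrable (fun x => 𝐞 (-⟪x, z⟫) • u x) := by
  have h := (VectorFourier.fourierIntegral_convergent_iff
    (μ := (volume : Measure E3)) (L := innerₗ E3)
    Real.continuous_fourierChar continuous_inner z).2 u.integrable
  exact h

lemma conj_ft_integrable (u : SchwartzMap E3 ℂ) :
    Integrable (fun w => (starRingEnd ℂ) (𝓕 ⇑u w)) := by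
  have h := schwartz_ft_integrable u
  refine h.norm.mono' (Complex.continuous_conj.comp_aestronglyMeasurable h.1) ?_
  filter_upwards with w
  simp

lemma prod_integrable (u₁ u₂ : SchwartzMap E3 ℂ) :
    Integrable (fun x => u₁ x * (starRingEnd ℂ) (u₂ x)) := by
  obtain ⟨C, hCpos, hC⟩ := u₂.decay 0 0
  simp only [pow_zero, one_mul, norm_iteratedFDeriv_zero] at hC
  have := u₁.integrable (μ := (volume : Measure E3))
  apply MeasureTheory.Integrable.mono' (g := fun x => C * ‖u₁ x‖) (this.norm.const_mul C)
  · exact (u₁.continuous.mul (Complex.continuous_conj.comp u₂.continuous)).aestronglyMeasurable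
  · filter_upwards with x
    rw [norm_mul, RCLike.norm_conj]
    calc ‖u₁ x‖ * ‖u₂ x‖ ≤ ‖u₁ x‖ * C := by
          apply mul_le_mul_of_nonneg_left (hC x) (norm_nonneg _)
    _ = C * ‖u₁ x‖ := mul_comm _ _

-- the inner convolution identity
lemma ft_product (u₁ u₂ : SchwartzMap E3 ℂ) (z : E3) :
    𝓕 (fun x => u₁ x * (starRingEnd ℂ) (u₂ x)) z
      = ∫ w, 𝓕 ⇑u₁ (w + z) * (starRingEnd ℂ) (𝓕 ⇑u₂ w) := by
  rw [Real.fourier_eq]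
  have h1 : ∀ x : E3, 𝐞 (-⟪x, z⟫) • (u₁ x * (starRingEnd ℂ) (u₂ x))
      = (𝐞 (-⟪x, z⟫) • u₁ x) * 𝓕 (fun w => (starRingEnd ℂ) (𝓕 ⇑u₂ w)) x := by
    intro x
    rw [ft_conj_ft u₂ x, Circle.smul_def, Circle.smul_def, smul_eq_mul, smul_eq_mul]
    ring
  simp_rw [h1]
  rw [← mult_formula _ _ (modulated_integrable u₁ z) (conj_ft_integrable u₂)]
  congr 1
  ext w
  rw [ft_modulation u₁ z w]

lemma main_identity (φ u₁ u₂ : SchwartzMap E3 ℂ) :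
    ∫ z : E3, φ z * u₁ z * (starRingEnd ℂ) (u₂ z)
      = ∫ z : E3, 𝓕 ⇑φ (-z) * ∫ w, 𝓕 ⇑u₁ (w + z) * (starRingEnd ℂ) (𝓕 ⇑u₂ w) := by
  have h1 : ∀ z : E3, φ z * u₁ z * (starRingEnd ℂ) (u₂ z)
      = 𝓕 (𝓕⁻ ⇑φ) z * (fun x => u₁ x * (starRingEnd ℂ) (u₂ x)) z := by
    intro z
    rw [ft_ftinv φ]
    ring
  simp_rw [h1]
  rw [mult_formula _ _ (schwartz_ftinv_integrable φ) (prod_integrable u₁ u₂)]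
  congr 1
  ext z
  rw [ft_product u₁ u₂ z, Real.fourierInv_eq_fourier_neg]

theorem stmt9 :
    ∃ C₀ : ℝ, 0 < C₀ ∧ ∀ (s₁ s₂ : ℝ), (s₁ = 1 ∨ s₁ = -1) → (s₂ = 1 ∨ s₂ = -1) →
      ∀ (k k₁ k₂ : ℕ) (j j₁ j₂ : ℤ) (φ u₁ u₂ : SchwartzMap E3 ℂ),
      Function.support (FourierTransform.fourier (⇑φ : E3 → ℂ)) ⊆ Ak k ∩ Bsj 1 j →
      Function.support (FourierTransform.fourier (⇑u₁ : E3 → ℂ)) ⊆ Ak k₁ ∩ Bsj s₁ j₁ →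
      Function.support (FourierTransform.fourier (⇑u₂ : E3 → ℂ)) ⊆ Ak k₂ ∩ Bsj s₂ j₂ →
      ((s₁ = 1 ∧ s₂ = -1) ∨
        (s₁ = -1 ∧ s₂ = 1 ∧ (k : ℝ) ≤ min (k₁ : ℝ) (k₂ : ℝ) - C₀)) →
      ((max j (max j₁ j₂) : ℝ) ≤ (max k (max k₁ k₂) : ℝ) - C₀) →
      ∫ z : E3, φ z * u₁ z * (starRingEnd ℂ) (u₂ z) = 0 := by
  refine ⟨100, by norm_num, ?_⟩
  intro s₁ s₂ hs₁ hs₂ k k₁ k₂ j j₁ j₂ φ u₁ u₂ hφ hu₁ hu₂ hcase hJ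
  rw [main_identity]
  have hzero : ∀ z : E3,
      𝓕 ⇑φ (-z) * (∫ w, 𝓕 ⇑u₁ (w + z) * (starRingEnd ℂ) (𝓕 ⇑u₂ w)) = 0 := by
    intro z
    by_cases hz : 𝓕 ⇑φ (-z) = 0
    · rw [hz, zero_mul]
    · have hmemφ := hφ (Function.mem_support.2 hz)
      have hinner : ∀ w : E3, 𝓕 ⇑u₁ (w + z) * (starRingEnd ℂ) (𝓕 ⇑u₂ w) = 0 := by
        intro w
        by_cases h1 : 𝓕 ⇑u₁ (w + z) = 0
        · rw [h1, zero_mul]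
        by_cases h2 : 𝓕 ⇑u₂ w = 0
        · rw [h2, map_zero, mul_zero]
        exfalso
        have hmem1 := hu₁ (Function.mem_support.2 h1)
        have hmem2 := hu₂ (Function.mem_support.2 h2)
        have habw : (-z) + (w + z) = w := by abel
        exact key_arith s₁ s₂ k k₁ k₂ j j₁ j₂ (-z) (w + z) hmemφ hmem1
          (by rw [habw]; exact hmem2) hcase hJ
      have h0 : (fun w : E3 => 𝓕 ⇑u₁ (w + z) * (starRingEnd ℂ) (𝓕 ⇑u₂ w))
          = fun _ => (0:ℂ) := funext hinner
      rw [h0, integral_zero, mul_zero]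
  have hfun : (fun z : E3 =>
      𝓕 ⇑φ (-z) * ∫ w, 𝓕 ⇑u₁ (w + z) * (starRingEnd ℂ) (𝓕 ⇑u₂ w)) = fun _ => (0:ℂ) :=
    funext hzero
  rw [hfun, integral_zero]
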